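/- Let p ≥ 5 be a prime and let l ∈ ZMod p. The number of pairs (x,y) ∈ (ZMod p) × (ZMod p) with x² + y² + xy - x - y = l is: 2p - 1 if 3l + 1 = 0 in ZMod p and p ≡ 1 (mod 6); 1 if 3l + 1 = 0 and p ≡ 5 (mod 6); p - 1 if 3l + 1 ≠ 0 and p ≡ 1 (mod 6); and p + 1 if 3l + 1 ≠ 0 and p ≡ 5 (mod 6). -/

import Mathlib

open Finset

section Aux

variable (p : ℕ) [Fact p.Prime]

private lemma aux_ringChar_ne_two (hp5 : 5 ≤ p) : ringChar (ZMod p) ≠ 2 := by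
  rw [ZMod.ringChar_zmod_n]; omega

private lemma aux_three_ne_zero (hp5 : 5 ≤ p) : (3 : ZMod p) ≠ 0 := by
  intro h
  have : ((3 : ℕ) : ZMod p) = 0 := by exact_mod_cast h
  rw [ZMod.natCast_eq_zero_iff] at this
  have := Nat.le_of_dvd (by norm_num) this
  omega

private lemma aux_two_ne_zero (hp5 : 5 ≤ p) : (2 : ZMod p) ≠ 0 := by
  intro h
  have : ((2 : ℕ) : ZMod p) = 0 := by exact_mod_cast h
  rw [ZMod.natCast_eq_zero_iff] at this
  have := Nat.le_of_dvd (by norm_num) this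
  omega

/-- `-3` is a square in `ZMod p` iff `p % 3 = 1`. -/
private lemma aux_isSquare_neg_three (hp5 : 5 ≤ p) : IsSquare (-3 : ZMod p) ↔ p % 3 = 1 := by
  haveI : Fact (Nat.Prime 3) := ⟨by norm_num⟩
  constructor
  · rintro ⟨s, hs⟩
    have h2 := aux_two_ne_zero p hp5
    have h4 : (2 : ZMod p) * 2⁻¹ = 1 := mul_inv_cancel₀ h2
    have h1 : ((s - 1) * 2⁻¹) ^ 2 + (s - 1) * 2⁻¹ + 1 = 0 := by
      linear_combination (-((2:ZMod p)⁻¹) ^ 2) * hs + ((-s - 1) * 2⁻¹ - 1) * h4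
    set ζ : ZMod p := (s - 1) * 2⁻¹ with hζ
    have hζ1 : ζ ≠ 1 := by
      intro h
      rw [h] at h1
      have : (3 : ZMod p) = 0 := by linear_combination h1
      exact aux_three_ne_zero p hp5 this
    have hζ0 : ζ ≠ 0 := by
      intro h
      rw [h] at h1
      simp at h1
    have hζ3 : ζ ^ 3 = 1 := by linear_combination (ζ - 1) * h1
    set u : (ZMod p)ˣ := Units.mk0 ζ hζ0 with hu
    have hu3 : u ^ 3 = 1 := by
      ext
      simpa [hu] using hζ3
    have hu1 : u ≠ 1 := by
      intro h
      apply hζ1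
      have := congrArg (Units.val) h
      simpa [hu] using this
    have ho : orderOf u = 3 := by
      have hdvd : orderOf u ∣ 3 := orderOf_dvd_of_pow_eq_one hu3
      rcases (Nat.prime_three.eq_one_or_self_of_dvd _ hdvd) with h | h
      · exact absurd (orderOf_eq_one_iff.mp h) hu1
      · exact h
    have hdvd : (3 : ℕ) ∣ p - 1 := by
      rw [← ZMod.card_units p, ← ho]
      exact orderOf_dvd_card
    omega
  · intro h3
    have hdvd : (3 : ℕ) ∣ Fintype.card (ZMod p)ˣ := by
      rw [ZMod.card_units p]; omega
    obtain ⟨g, hg⟩ := exists_prime_orderOf_dvd_card 3 hdvd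
    have hg3 : g ^ 3 = 1 := by rw [← hg]; exact pow_orderOf_eq_one g
    have hg1 : g ≠ 1 := by
      intro h; rw [h, orderOf_one] at hg; norm_num at hg
    set ζ : ZMod p := (g : ZMod p) with hζ
    have hζ3 : ζ ^ 3 = 1 := by
      have := congrArg (Units.val) hg3
      push_cast at this
      exact this
    have hζ1 : ζ ≠ 1 := by
      intro h
      apply hg1
      ext
      simpa [hζ] using h
    have h1 : ζ ^ 2 + ζ + 1 = 0 := by
      have hfac : (ζ - 1) * (ζ ^ 2 + ζ + 1) = 0 := by linear_combination hζ3
      rcases mul_eq_zero.mp hfac with h | h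
      · exact absurd (by linear_combination h) hζ1
      · exact h
    exact ⟨2 * ζ + 1, by linear_combination -4 * h1⟩

private lemma aux_sqrt_card (hp5 : 5 ≤ p) (a : ZMod p) :
    ((univ.filter (fun x : ZMod p => x ^ 2 = a)).card : ℤ) =
      quadraticChar (ZMod p) a + 1 := by
  have h := quadraticChar_card_sqrts (F := ZMod p) (aux_ringChar_ne_two p hp5) a
  rw [← h]
  congr 2
  ext x
  simp



private lemma aux_sqrt_card' (hp5 : 5 ≤ p) (a : ZMod p) :
    ((univ.filter (fun x : ZMod p => x ^ 2 = a)).card : ℤ) =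
      quadraticChar (ZMod p) a + 1 := by
  have h := quadraticChar_card_sqrts (F := ZMod p) (by rw [ZMod.ringChar_zmod_n]; omega : ringChar (ZMod p) ≠ 2) a
  rw [← h]
  congr 2
  ext x
  simp

private lemma aux_sum_sq (hp5 : 5 ≤ p) (f : ZMod p → ℤ) :
    ∑ v : ZMod p, f (v ^ 2) = ∑ a : ZMod p, (quadraticChar (ZMod p) a + 1) * f a := by
  rw [← Finset.sum_fiberwise' univ (fun v : ZMod p => v ^ 2) f]
  refine Finset.sum_congr rfl fun a _ => ?_
  rw [Finset.sum_const, nsmul_eq_mul, aux_sqrt_card' p hp5 a]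

-- the key character sum
private lemma aux_char_sum (hp5 : 5 ≤ p) (c : ZMod p) :
    ∑ v : ZMod p, quadraticChar (ZMod p) (c - 3 * v ^ 2) =
      quadraticChar (ZMod p) (-3) * (if c = 0 then ((p : ℤ) - 1) else -1) := by
  set χ := quadraticChar (ZMod p) with hχ
  have hF2 : ringChar (ZMod p) ≠ 2 := by rw [ZMod.ringChar_zmod_n]; omega
  have h3 : (3 : ZMod p) ≠ 0 := by
    intro h
    have : ((3 : ℕ) : ZMod p) = 0 := by exact_mod_cast h
    rw [ZMod.natCast_eq_zero_iff] at this
    have := Nat.le_of_dvd (by norm_num) this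
    omega
  by_cases hc : c = 0
  · subst hc
    simp only [if_pos rfl]
    have : ∀ v : ZMod p, χ (0 - 3 * v ^ 2) = χ (-3) * (if v = 0 then 0 else 1) := by
      intro v
      by_cases hv : v = 0
      · simp [hv, hχ]
      · rw [show (0 : ZMod p) - 3 * v ^ 2 = (-3) * v ^ 2 by ring, map_mul,
          quadraticChar_sq_one' (F := ZMod p) hv, if_neg hv, mul_one]
    rw [Finset.sum_congr rfl fun v _ => this v, ← Finset.mul_sum]
    congr 1
    rw [Finset.sum_ite, Finset.sum_const, Finset.sum_const]
    simp only [smul_zero, zero_add, nsmul_eq_mul, mul_one]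
    have : (univ.filter (fun v : ZMod p => ¬v = 0)).card = p - 1 := by
      have h1 : (univ.filter (fun v : ZMod p => ¬v = 0)) = univ.erase 0 := by
        ext v; simp [Finset.mem_erase, and_comm]
      rw [h1, Finset.card_erase_of_mem (Finset.mem_univ 0), Finset.card_univ, ZMod.card]
    rw [this]
    have hp1 : 1 ≤ p := by omega
    push_cast [this, hp1]
    ring
  · simp only [if_neg hc]
    rw [aux_sum_sq p hp5 (fun a => χ (c - 3 * a))]
    have expand : ∀ a : ZMod p, (χ a + 1) * χ (c - 3 * a) = χ a * χ (c - 3 * a) + χ (c - 3 * a) := by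
      intro a; ring
    rw [Finset.sum_congr rfl fun a _ => expand a, Finset.sum_add_distrib]
    -- second sum is zero
    have hzero : ∑ a : ZMod p, χ (c - 3 * a) = 0 := by
      have h := Fintype.sum_equiv
        (⟨fun a : ZMod p => c - 3 * a, fun b => (c - b) * 3⁻¹,
          fun a => by field_simp; ring, fun b => by field_simp; ring⟩ : ZMod p ≃ ZMod p)
        (fun a => χ (c - 3 * a)) (fun b => χ b) (fun a => rfl)
      rw [h, quadraticChar_sum_zero hF2]
    rw [hzero, add_zero]
    -- first sum via Jacobi sum
    have hc3 : c * 3⁻¹ ≠ 0 := mul_ne_zero hc (inv_ne_zero h3)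
    have he2 : ∑ a : ZMod p, χ a * χ (c - 3 * a)
        = ∑ x : ZMod p, χ (c * 3⁻¹ * x) * χ (c - 3 * (c * 3⁻¹ * x)) :=
      (Fintype.sum_equiv (Equiv.mulLeft₀ (c * 3⁻¹) hc3)
        (fun x => χ (c * 3⁻¹ * x) * χ (c - 3 * (c * 3⁻¹ * x)))
        (fun a => χ a * χ (c - 3 * a)) (fun x => rfl)).symm
    rw [he2]
    have hterm : ∀ x : ZMod p, χ (c * 3⁻¹ * x) * χ (c - 3 * (c * 3⁻¹ * x))
        = χ (3⁻¹) * (χ x * χ (1 - x)) := by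
      intro x
      have h1 : c - 3 * (c * 3⁻¹ * x) = c * (1 - x) := by field_simp
      rw [h1, show c * 3⁻¹ * x = c * (3⁻¹ * x) by ring, map_mul, map_mul, map_mul]
      have hcc : χ c * χ c = 1 := by
        have := quadraticChar_sq_one (F := ZMod p) hc
        rwa [sq] at this
      linear_combination (χ 3⁻¹ * χ x * χ (1 - x)) * hcc
    rw [Finset.sum_congr rfl fun x _ => hterm x, ← Finset.mul_sum]
    have hjac : ∑ x : ZMod p, χ x * χ (1 - x) = -χ (-1) := by
      have h := jacobiSum_nontrivial_inv (F := ZMod p) (R := ℤ)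
        (χ := quadraticChar (ZMod p)) (quadraticChar_ne_one hF2)
      rw [(quadraticChar_isQuadratic (ZMod p)).inv] at h
      rw [← h, jacobiSum]
    rw [hjac]
    have hinv3 : χ 3⁻¹ = χ 3 := by
      have hA : χ 3 * χ 3⁻¹ = 1 := by
        rw [← map_mul, mul_inv_cancel₀ h3, map_one]
      have hB : χ 3 ^ 2 = 1 := quadraticChar_sq_one (F := ZMod p) h3
      linear_combination (χ 3) * hA - (χ 3⁻¹) * hB
    rw [hinv3, show (-3 : ZMod p) = -1 * 3 by ring, map_mul]
    ring


private lemma aux_card_norm (hp5 : 5 ≤ p) (c : ZMod p) :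
    (Nat.card {uv : ZMod p × ZMod p // uv.1 ^ 2 + 3 * uv.2 ^ 2 = c} : ℤ)
      = p + quadraticChar (ZMod p) (-3) * (if c = 0 then ((p : ℤ) - 1) else -1) := by
  have e : {uv : ZMod p × ZMod p // uv.1 ^ 2 + 3 * uv.2 ^ 2 = c}
      ≃ Σ v : ZMod p, {u : ZMod p // u ^ 2 = c - 3 * v ^ 2} :=
    { toFun := fun z => ⟨z.1.2, z.1.1, by linear_combination z.2⟩
      invFun := fun z => ⟨(z.2.1, z.1), by linear_combination z.2.2⟩
      left_inv := fun z => rfl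
      right_inv := fun z => rfl }
  rw [Nat.card_eq_fintype_card, Fintype.card_congr e, Fintype.card_sigma]
  push_cast
  have hfib : ∀ v : ZMod p, (Fintype.card {u : ZMod p // u ^ 2 = c - 3 * v ^ 2} : ℤ)
      = quadraticChar (ZMod p) (c - 3 * v ^ 2) + 1 := by
    intro v
    rw [Fintype.card_subtype]
    exact aux_sqrt_card' p hp5 _
  rw [Finset.sum_congr rfl fun v _ => hfib v, Finset.sum_add_distrib,
    aux_char_sum p hp5 c, Finset.sum_const, Finset.card_univ, ZMod.card]
  ring

end Aux

theorem count_x2_y2_xy_x_y_eq_l (p : ℕ) (hp : p.Prime) (hp5 : 5 ≤ p) (l : ZMod p) :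
    (3 * l + 1 = 0 → p % 6 = 1 →
      Nat.card {xy : ZMod p × ZMod p //
        xy.1 ^ 2 + xy.2 ^ 2 + xy.1 * xy.2 - xy.1 - xy.2 = l} = 2 * p - 1) ∧
    (3 * l + 1 = 0 → p % 6 = 5 →
      Nat.card {xy : ZMod p × ZMod p //
        xy.1 ^ 2 + xy.2 ^ 2 + xy.1 * xy.2 - xy.1 - xy.2 = l} = 1) ∧
    (3 * l + 1 ≠ 0 → p % 6 = 1 →
      Nat.card {xy : ZMod p × ZMod p //
        xy.1 ^ 2 + xy.2 ^ 2 + xy.1 * xy.2 - xy.1 - xy.2 = l} = p - 1) ∧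
    (3 * l + 1 ≠ 0 → p % 6 = 5 →
      Nat.card {xy : ZMod p × ZMod p //
        xy.1 ^ 2 + xy.2 ^ 2 + xy.1 * xy.2 - xy.1 - xy.2 = l} = p + 1) := by
  haveI : Fact p.Prime := ⟨hp⟩
  have h2 : (2 : ZMod p) ≠ 0 := aux_two_ne_zero p hp5
  have h3 : (3 : ZMod p) ≠ 0 := aux_three_ne_zero p hp5
  have h4 : (4 : ZMod p) ≠ 0 := by
    intro h
    have : ((4 : ℕ) : ZMod p) = 0 := by exact_mod_cast h
    rw [ZMod.natCast_eq_zero_iff] at this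
    have := Nat.le_of_dvd (by norm_num) this
    omega
  have hne3 : (-3 : ZMod p) ≠ 0 := neg_ne_zero.mpr h3
  have hi : (3 : ZMod p) * 3⁻¹ = 1 := mul_inv_cancel₀ h3
  set c : ZMod p := 4 * l + 4 * 3⁻¹ with hc
  -- change of variables and count
  have hiff : ∀ z : ZMod p × ZMod p,
      (z.1 ^ 2 + z.2 ^ 2 + z.1 * z.2 - z.1 - z.2 = l) ↔
      ((2 * z.1 + z.2 - 1) ^ 2 + 3 * (z.2 - 3⁻¹) ^ 2 = c) := by
    intro z
    constructor
    · intro h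
      rw [hc]
      linear_combination 4 * h + (-2 * z.2 + 3⁻¹ - 1) * hi
    · intro hq
      rw [hc] at hq
      have h5 : 4 * (z.1 ^ 2 + z.2 ^ 2 + z.1 * z.2 - z.1 - z.2) = 4 * l := by
        linear_combination hq + (2 * z.2 - 3⁻¹ + 1) * hi
      exact mul_left_cancel₀ h4 h5
  have hcount : Nat.card {xy : ZMod p × ZMod p //
        xy.1 ^ 2 + xy.2 ^ 2 + xy.1 * xy.2 - xy.1 - xy.2 = l}
      = Nat.card {uv : ZMod p × ZMod p // uv.1 ^ 2 + 3 * uv.2 ^ 2 = c} :=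
    Nat.card_congr (Equiv.subtypeEquiv
      ⟨fun z => (2 * z.1 + z.2 - 1, z.2 - 3⁻¹),
       fun w => ((w.1 + 1 - w.2 - 3⁻¹) * 2⁻¹, w.2 + 3⁻¹),
       fun z => by
         rw [Prod.ext_iff]
         constructor <;> (dsimp; field_simp; try ring),
       fun w => by
         rw [Prod.ext_iff]
         constructor <;> (dsimp; field_simp; try ring)⟩ hiff)
  have hN := aux_card_norm p hp5 c
  rw [← hcount] at hN
  have hc0 : c = 0 ↔ 3 * l + 1 = 0 := by
    have hfac : c = (4 * 3⁻¹) * (3 * l + 1) := by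
      rw [hc]; linear_combination (-4 * l) * hi
    rw [hfac, mul_eq_zero]
    have h43 : (4 : ZMod p) * 3⁻¹ ≠ 0 := mul_ne_zero h4 (inv_ne_zero h3)
    simp [h43]
  refine ⟨fun hl h6 => ?_, fun hl h6 => ?_, fun hl h6 => ?_, fun hl h6 => ?_⟩
  · have hχ : quadraticChar (ZMod p) (-3 : ZMod p) = 1 :=
      (quadraticChar_one_iff_isSquare hne3).mpr
        ((aux_isSquare_neg_three p hp5).mpr (by omega))
    rw [hχ, if_pos (hc0.mpr hl)] at hN
    simp only [one_mul] at hN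
    omega
  · have hχ : quadraticChar (ZMod p) (-3 : ZMod p) = -1 :=
      quadraticChar_neg_one_iff_not_isSquare.mpr
        (by rw [aux_isSquare_neg_three p hp5]; omega)
    rw [hχ, if_pos (hc0.mpr hl)] at hN
    have : (Nat.card {xy : ZMod p × ZMod p //
        xy.1 ^ 2 + xy.2 ^ 2 + xy.1 * xy.2 - xy.1 - xy.2 = l} : ℤ) = 1 := by
      rw [hN]; ring
    omega
  · have hχ : quadraticChar (ZMod p) (-3 : ZMod p) = 1 :=
      (quadraticChar_one_iff_isSquare hne3).mpr
        ((aux_isSquare_neg_three p hp5).mpr (by omega))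
    rw [hχ, if_neg (fun h => hl (hc0.mp h))] at hN
    simp only [one_mul] at hN
    omega
  · have hχ : quadraticChar (ZMod p) (-3 : ZMod p) = -1 :=
      quadraticChar_neg_one_iff_not_isSquare.mpr
        (by rw [aux_isSquare_neg_three p hp5]; omega)
    rw [hχ, if_neg (fun h => hl (hc0.mp h))] at hN
    have : (Nat.card {xy : ZMod p × ZMod p //
        xy.1 ^ 2 + xy.2 ^ 2 + xy.1 * xy.2 - xy.1 - xy.2 = l} : ℤ) = p + 1 := by
      rw [hN]; ring
    omega
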